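/- Fix γ > 0 and define h : ℝ → ℝ by h(λ) = √γ·λ/(λ² + γ). Let B > 0, κ ≥ 1, and 0 < ε ≤ 1. Suppose λ and λ̄ are real numbers with B/κ ≤ |λ| and |λ̄ − λ| ≤ ε·B/(4κ). Then the ratio h(λ̄)/h(λ) is well-defined (h(λ) ≠ 0) and satisfies 1 − ε/3 ≤ h(λ̄)/h(λ) ≤ 1 + ε/3. -/

import Mathlib

lemma aux_up (a g t s : ℝ) (ha : 0 ≤ a) (hg : 0 < g) (hs : 0 < s) (hs1 : s ≤ 1)
    (ht1 : -(s/4) ≤ t) (ht2 : t ≤ s/4) :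
    (1+t)*(a+g) ≤ (1+s/3)*((1+t)^2*a+g) := by
  nlinarith [mul_nonneg ha (sq_nonneg (t + s/4)), mul_nonneg (mul_nonneg ha hs.le) (sq_nonneg t),
    mul_nonneg (mul_nonneg ha (sub_nonneg.2 hs1)) (sub_nonneg.2 ht1),
    mul_nonneg hg.le (by linarith : 0 ≤ s/3 - t),
    mul_nonneg (mul_nonneg ha hs.le) (mul_nonneg (sub_nonneg.2 hs1) (by linarith : (0:ℝ) ≤ 4 - s)),
    mul_nonneg ha (sub_nonneg.2 ht1)]

lemma aux_lo (a g t s : ℝ) (ha : 0 ≤ a) (hg : 0 < g) (hs : 0 < s) (hs1 : s ≤ 1)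
    (ht1 : -(s/4) ≤ t) (ht2 : t ≤ s/4) :
    (1-s/3)*((1+t)^2*a+g) ≤ (1+t)*(a+g) := by
  nlinarith [mul_nonneg hg.le (by linarith : 0 ≤ t + s/3),
    mul_nonneg ha (mul_nonneg (by linarith : (0:ℝ) ≤ 1+t) (by nlinarith : 0 ≤ s/3 - t*(1-s/3))),
    mul_nonneg ha (sq_nonneg t)]


/-- For `h(λ) = √γ λ / (λ² + γ)`: if `B/κ ≤ |λ|` and `λ̄` estimates `λ` with
precision `ε B / (4 κ)`, then `h(λ) ≠ 0` and `1 − ε/3 ≤ h(λ̄)/h(λ) ≤ 1 + ε/3`. -/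
theorem h_ratio_bounds
    (γ B κ ε lam lamBar : ℝ) (hγ : 0 < γ) (hB : 0 < B) (hκ : 1 ≤ κ)
    (hε : 0 < ε) (hε1 : ε ≤ 1) (hlam : B / κ ≤ |lam|)
    (hest : |lamBar - lam| ≤ ε * B / (4 * κ)) :
    let h : ℝ → ℝ := fun x => Real.sqrt γ * x / (x ^ 2 + γ)
    h lam ≠ 0 ∧ 1 - ε / 3 ≤ h lamBar / h lam ∧ h lamBar / h lam ≤ 1 + ε / 3 := by
  intro h
  have hκ0 : (0:ℝ) < κ := lt_of_lt_of_le one_pos hκ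
  have hBκ : 0 < B / κ := div_pos hB hκ0
  have hlam0 : lam ≠ 0 := by
    intro hz
    rw [hz, abs_zero] at hlam
    linarith
  have hlamsq : 0 < lam ^ 2 := by positivity
  have hsγ : 0 < Real.sqrt γ := Real.sqrt_pos.2 hγ
  have hD1 : 0 < lam ^ 2 + γ := by positivity
  have hD2 : 0 < lamBar ^ 2 + γ := by positivity
  -- |lamBar - lam| ≤ ε/4 * |lam|
  have hest' : |lamBar - lam| ≤ ε / 4 * |lam| := by
    calc |lamBar - lam| ≤ ε * B / (4 * κ) := hest
    _ = ε / 4 * (B / κ) := by ring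
    _ ≤ ε / 4 * |lam| := by
        apply mul_le_mul_of_nonneg_left hlam (by positivity)
  set t : ℝ := (lamBar - lam) / lam with ht_def
  have habs_t : |t| ≤ ε / 4 := by
    rw [ht_def, abs_div]
    rw [div_le_iff₀ (abs_pos.2 hlam0)]
    exact hest'
  have ht1 : -(ε/4) ≤ t := (abs_le.1 habs_t).1
  have ht2 : t ≤ ε/4 := (abs_le.1 habs_t).2
  have hlamBar_eq : lamBar = lam * (1 + t) := by
    rw [ht_def, mul_add, mul_one, mul_div_assoc', mul_comm lam (lamBar - lam), mul_div_assoc, div_self hlam0]; ring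
  have hDen : 0 < (1+t)^2 * lam^2 + γ := by positivity
  have hD2eq : lamBar ^ 2 + γ = (1+t)^2 * lam^2 + γ := by rw [hlamBar_eq]; ring
  have hne : h lam ≠ 0 := by
    simp only [h]
    exact div_ne_zero (mul_ne_zero (ne_of_gt hsγ) hlam0) (ne_of_gt hD1)
  refine ⟨hne, ?_, ?_⟩
  · have key : h lamBar / h lam = ((1+t) * (lam^2 + γ)) / ((1+t)^2 * lam^2 + γ) := by
      simp only [h]
      rw [hD2eq, hlamBar_eq]
      field_simp
    rw [key, le_div_iff₀ hDen]
    have := aux_lo (lam^2) γ t ε (sq_nonneg lam) hγ hε hε1 ht1 ht2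
    linarith [this]
  · have key : h lamBar / h lam = ((1+t) * (lam^2 + γ)) / ((1+t)^2 * lam^2 + γ) := by
      simp only [h]
      rw [hD2eq, hlamBar_eq]
      field_simp
    rw [key, div_le_iff₀ hDen]
    have := aux_up (lam^2) γ t ε (sq_nonneg lam) hγ hε hε1 ht1 ht2
    linarith [this]
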